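/- Let G be a graph with nonempty disjoint vertex subsets A and B such that each vertex in A has at most Δ neighbours in B (where Δ > 0) and every vertex in B has a neighbour in A. Then for every real Γ > 0, either |B| < 20·√(Γ·Δ), or for some integer k ≥ 1 there are k vertices a_1,…,a_k in A and k pairwise disjoint subsets B_1,…,B_k of B such that for every i ∈ [k], |B_i| ≥ Γ/k², and a_i is adjacent in G to every vertex in B_i and to no vertex in B_j for all j ∈ [k] with j ≠ i. -/

import Mathlib

open SimpleGraph

/-- The five-vertex path `P₅`. -/
def P5 : SimpleGraph (Fin 5) := SimpleGraph.fromRel (fun i j => (i : ℕ) + 1 = (j : ℕ))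

/-- A graph is `P₅`-free if it contains no induced copy of `P5`
(equivalently, no graph embedding of `P5`). -/
def P5Free {V : Type*} (G : SimpleGraph V) : Prop := IsEmpty (P5 ↪g G)

/-- A graph is `T`-free if it contains no induced copy of `T`. -/
def TFree {W V : Type*} (T : SimpleGraph W) (G : SimpleGraph V) : Prop := IsEmpty (T ↪g G)

/-- A stable (independent) set of vertices. -/
def IsStableSet {V : Type*} (G : SimpleGraph V) (s : Finset V) : Prop :=
  ∀ ⦃u⦄, u ∈ s → ∀ ⦃v⦄, v ∈ s → ¬ G.Adj u v

/-- The stability number `α(G)`. -/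
noncomputable def alphaNum {V : Type*} [Fintype V] (G : SimpleGraph V) : ℕ :=
  sSup {n | ∃ s : Finset V, IsStableSet G s ∧ s.card = n}

/-- The clique number `ω(G)`. -/
noncomputable def omegaNum {V : Type*} [Fintype V] (G : SimpleGraph V) : ℕ :=
  sSup {n | ∃ s : Finset V, G.IsClique (s : Set V) ∧ s.card = n}

/-- `ψ(G) = |G| / α(G)` (and `0` for the null graph). -/
noncomputable def psi {V : Type*} [Fintype V] (G : SimpleGraph V) : ℝ :=
  if Fintype.card V = 0 then 0 else (Fintype.card V : ℝ) / (alphaNum G : ℝ)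

/-- `ψ(S)` for a vertex subset `S`, i.e. `ψ(G[S])`. -/
noncomputable def psiSub {V : Type*} [Fintype V] (G : SimpleGraph V) (s : Finset V) : ℝ :=
  psi (G.induce (↑s : Set V))

/-- The Hall ratio `ρ(G)`: the maximum of `ψ(F)` over induced subgraphs `F` of `G`. -/
noncomputable def rho {V : Type*} [Fintype V] (G : SimpleGraph V) : ℝ :=
  ⨆ s : Finset V, psiSub G s

/-- `ρ(S)` for a vertex subset `S`, i.e. `ρ(G[S])`. -/
noncomputable def rhoSub {V : Type*} [Fintype V] (G : SimpleGraph V) (s : Finset V) : ℝ :=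
  rho (G.induce (↑s : Set V))

/-- `(A, B)` is a complete pair: disjoint, with every vertex of `A` adjacent to every
vertex of `B`. -/
def CompletePair {V : Type*} (G : SimpleGraph V) (A B : Finset V) : Prop :=
  Disjoint A B ∧ ∀ a ∈ A, ∀ b ∈ B, G.Adj a b

/-- `(A, B)` is an anticomplete pair: disjoint, with no edges between `A` and `B`. -/
def AnticompletePair {V : Type*} (G : SimpleGraph V) (A B : Finset V) : Prop :=
  Disjoint A B ∧ ∀ a ∈ A, ∀ b ∈ B, ¬ G.Adj a b

/-- A complete blockade: pairwise disjoint sets, pairwise complete to each other. -/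
def CompleteBlockade {V : Type*} (G : SimpleGraph V) {k : ℕ} (B : Fin k → Finset V) : Prop :=
  (∀ i j, i ≠ j → Disjoint (B i) (B j)) ∧
  (∀ i j, i ≠ j → ∀ a ∈ B i, ∀ b ∈ B j, G.Adj a b)

/-- An anticomplete blockade: pairwise disjoint sets, pairwise anticomplete to each other. -/
def AnticompleteBlockade {V : Type*} (G : SimpleGraph V) {k : ℕ} (B : Fin k → Finset V) : Prop :=
  (∀ i j, i ≠ j → Disjoint (B i) (B j)) ∧
  (∀ i j, i ≠ j → ∀ a ∈ B i, ∀ b ∈ B j, ¬ G.Adj a b)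

/-- The fractional chromatic number `χ*(G)`: the least `q ≥ 0` for which there are
nonnegative weights on the stable sets summing to `q` that cover every vertex with
total weight at least `1`. -/
noncomputable def fracChrom {V : Type*} [Fintype V] [DecidableEq V] (G : SimpleGraph V) : ℝ :=
  sInf {q : ℝ | 0 ≤ q ∧ ∃ x : Finset V → ℝ,
    (∀ s, 0 ≤ x s) ∧ (∀ s, ¬ IsStableSet G s → x s = 0) ∧
    (∑ s : Finset V, x s) = q ∧
    ∀ v : V, 1 ≤ ∑ s ∈ Finset.univ.filter (fun s : Finset V => v ∈ s), x s}

/-- `G` is `ε`-sparse: every vertex has degree at most `ε·|G|`. -/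
def EpsSparse {V : Type*} [Fintype V] (ε : ℝ) (G : SimpleGraph V) : Prop :=
  ∀ v : V, ((G.neighborSet v).ncard : ℝ) ≤ ε * (Fintype.card V : ℝ)

/-- `G` is `(1-ε)`-dense: the complement of `G` is `ε`-sparse. -/
def OneSubEpsDense {V : Type*} [Fintype V] (ε : ℝ) (G : SimpleGraph V) : Prop :=
  EpsSparse ε Gᶜ

/-- `G` is `ε`-restricted: `ε`-sparse or `(1-ε)`-dense. -/
def EpsRestricted {V : Type*} [Fintype V] (ε : ℝ) (G : SimpleGraph V) : Prop :=
  EpsSparse ε G ∨ OneSubEpsDense ε G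

/-- `G` is `(p,q)`-sparse: every induced subgraph `F` with `ρ(F) ≥ q` contains an
anticomplete pair `(X,Y)` with `ρ(X), ρ(Y) ≥ p`. -/
def PQSparse {V : Type*} [Fintype V] (G : SimpleGraph V) (p q : ℝ) : Prop :=
  ∀ s : Finset V, q ≤ rhoSub G s →
    ∃ X Y : Finset V, X ⊆ s ∧ Y ⊆ s ∧ AnticompletePair G X Y ∧
      p ≤ rhoSub G X ∧ p ≤ rhoSub G Y

/-- `φ_s = ∏_{i=1}^{s} (1 - 2^{-2^{i+1}})` (so `φ_0 = 1`). -/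
noncomputable def phi (s : ℕ) : ℝ :=
  ∏ i ∈ Finset.Icc 1 s, (1 - ((2:ℝ) ^ (2 ^ (i+1)))⁻¹)

/-- `φ_{r,s} = φ_s / φ_r`. -/
noncomputable def phiRS (r s : ℕ) : ℝ := phi s / phi r


open Finset

def CombCond {V : Type} (G : SimpleGraph V) (A B : Finset V) (Γ : ℝ) : Prop :=
  ∃ (k : ℕ), 1 ≤ k ∧ ∃ (a : Fin k → V) (Bs : Fin k → Finset V),
      Function.Injective a ∧ (∀ i, a i ∈ A) ∧ (∀ i, Bs i ⊆ B) ∧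
      (∀ i j, i ≠ j → Disjoint (Bs i) (Bs j)) ∧
      (∀ i, Γ / (k : ℝ) ^ 2 ≤ ((Bs i).card : ℝ)) ∧
      (∀ i, ∀ b ∈ Bs i, G.Adj (a i) b) ∧
      (∀ i j, j ≠ i → ∀ b ∈ Bs j, ¬ G.Adj (a i) b)

lemma comb_core {V : Type} (G : SimpleGraph V) [DecidableEq V] [DecidableRel G.Adj]
    (A B : Finset V) (Δ Γ : ℝ) (hΔ : 0 < Δ) (hΓ : 0 < Γ)
    (hdeg : ∀ a ∈ A, ((B.filter (G.Adj a)).card : ℝ) ≤ Δ)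
    (hn : 20 * Real.sqrt (Γ * Δ) ≤ (B.card : ℝ)) :
    CombCond G A B Γ ∨
      ∃ U : Finset V, U ⊆ B ∧ 18 * Real.sqrt (Γ * Δ) ≤ (U.card : ℝ) ∧
        (∀ a ∈ A, ((U.filter (G.Adj a)).card : ℝ) ≤ Δ / 4) := by
  set nbB : V → Finset V := fun a => B.filter (G.Adj a) with hnbB
  obtain ⟨S, hSA, hmax⟩ := Finset.exists_max_image A.powerset
    (fun S => ((S.biUnion nbB).card : ℝ) - (Δ/4) * S.card)
    ⟨∅, Finset.mem_powerset.2 (Finset.empty_subset _)⟩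
  rw [Finset.mem_powerset] at hSA
  have hnb_sub : ∀ a, nbB a ⊆ B := fun a => Finset.filter_subset _ _
  have hcov_sub : S.biUnion nbB ⊆ B := by
    intro x hx
    obtain ⟨a, _, hxa⟩ := Finset.mem_biUnion.1 hx
    exact hnb_sub a hxa
  have key1 : ∀ a ∈ S, Δ/4 ≤ (((nbB a) \ ((S.erase a).biUnion nbB)).card : ℝ) := by
    intro a ha
    have h1 := hmax (S.erase a) (Finset.mem_powerset.2 ((Finset.erase_subset _ _).trans hSA))
    have hcov : S.biUnion nbB = nbB a ∪ (S.erase a).biUnion nbB := by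
      conv_lhs => rw [(Finset.insert_erase ha).symm]
      rw [Finset.biUnion_insert]
    have hcard : ((nbB a) \ ((S.erase a).biUnion nbB)).card + ((S.erase a).biUnion nbB).card
        = (S.biUnion nbB).card := by rw [hcov, Finset.card_sdiff_add_card]
    have hScard : (S.erase a).card + 1 = S.card := Finset.card_erase_add_one ha
    rw [← hcard, ← hScard] at h1
    push_cast at h1
    linarith
  have key2 : ∀ a ∈ A, (((B \ S.biUnion nbB).filter (G.Adj a)).card : ℝ) ≤ Δ / 4 := by
    intro a ha
    by_cases haS : a ∈ S
    · have : (B \ S.biUnion nbB).filter (G.Adj a) = ∅ := by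
        rw [Finset.filter_eq_empty_iff]
        intro x hx hadj
        have : x ∈ S.biUnion nbB :=
          Finset.mem_biUnion.2 ⟨a, haS, Finset.mem_filter.2 ⟨(Finset.mem_sdiff.1 hx).1, hadj⟩⟩
        exact (Finset.mem_sdiff.1 hx).2 this
      rw [this]
      simp
      positivity
    · have h1 := hmax (insert a S) (Finset.mem_powerset.2 (Finset.insert_subset ha hSA))
      have hcard : ((nbB a) \ (S.biUnion nbB)).card + (S.biUnion nbB).card
          = ((insert a S).biUnion nbB).card := by
        rw [Finset.biUnion_insert, Finset.card_sdiff_add_card]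
      have hScard : (insert a S).card = S.card + 1 := Finset.card_insert_of_notMem haS
      rw [← hcard] at h1
      rw [hScard] at h1
      push_cast at h1
      have hsub : (B \ S.biUnion nbB).filter (G.Adj a) ⊆ (nbB a) \ (S.biUnion nbB) := by
        intro x hx
        obtain ⟨hx1, hadj⟩ := Finset.mem_filter.1 hx
        obtain ⟨hxB, hxcov⟩ := Finset.mem_sdiff.1 hx1
        exact Finset.mem_sdiff.2 ⟨Finset.mem_filter.2 ⟨hxB, hadj⟩, hxcov⟩
      have := Finset.card_le_card hsub
      have : (((B \ S.biUnion nbB).filter (G.Adj a)).card : ℝ)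
          ≤ (((nbB a) \ (S.biUnion nbB)).card : ℝ) := by exact_mod_cast this
      linarith
  by_cases hk : 1 ≤ S.card ∧ Γ ≤ (S.card : ℝ)^2 * (Δ/4)
  · left
    refine ⟨S.card, hk.1, fun i => ((S.equivFin.symm i : {x // x ∈ S}) : V),
      fun i => (nbB ((S.equivFin.symm i : {x // x ∈ S}) : V)) \
        ((S.erase ((S.equivFin.symm i : {x // x ∈ S}) : V)).biUnion nbB), ?_, ?_, ?_, ?_, ?_, ?_, ?_⟩
    · intro i j h
      exact S.equivFin.symm.injective (Subtype.coe_injective h)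
    · intro i
      exact hSA (S.equivFin.symm i).2
    · intro i
      exact (Finset.sdiff_subset).trans (hnb_sub _)
    · intro i j hij
      rw [Finset.disjoint_left]
      intro x hxi hxj
      have hne : ((S.equivFin.symm i : {x // x ∈ S}) : V) ≠ ((S.equivFin.symm j : {x // x ∈ S}) : V) := by
        intro h
        exact hij (S.equivFin.symm.injective (Subtype.coe_injective h))
      have hmemerase : ((S.equivFin.symm i : {x // x ∈ S}) : V) ∈
          S.erase ((S.equivFin.symm j : {x // x ∈ S}) : V) :=
        Finset.mem_erase.2 ⟨hne, (S.equivFin.symm i).2⟩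
      have : x ∈ (S.erase ((S.equivFin.symm j : {x // x ∈ S}) : V)).biUnion nbB :=
        Finset.mem_biUnion.2 ⟨_, hmemerase, (Finset.mem_sdiff.1 hxi).1⟩
      exact (Finset.mem_sdiff.1 hxj).2 this
    · intro i
      have h1 := key1 _ (S.equivFin.symm i).2
      have hk1 : (0:ℝ) < (S.card : ℝ)^2 := by
        have : (0:ℝ) < (S.card : ℝ) := by exact_mod_cast hk.1
        positivity
      have : Γ / (S.card : ℝ)^2 ≤ Δ/4 := by
        rw [div_le_iff₀ hk1]
        calc Γ ≤ (S.card : ℝ)^2 * (Δ/4) := hk.2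
          _ = Δ/4 * (S.card : ℝ)^2 := by ring
      linarith
    · intro i b hb
      exact (Finset.mem_filter.1 (Finset.mem_sdiff.1 hb).1).2
    · intro i j hji b hb hadj
      have hne : ((S.equivFin.symm i : {x // x ∈ S}) : V) ≠ ((S.equivFin.symm j : {x // x ∈ S}) : V) := by
        intro h
        exact hji (S.equivFin.symm.injective (Subtype.coe_injective h)).symm
      have hbB : b ∈ B := hnb_sub _ (Finset.mem_sdiff.1 hb).1
      have hmemerase : ((S.equivFin.symm i : {x // x ∈ S}) : V) ∈
          S.erase ((S.equivFin.symm j : {x // x ∈ S}) : V) :=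
        Finset.mem_erase.2 ⟨hne, (S.equivFin.symm i).2⟩
      have : b ∈ (S.erase ((S.equivFin.symm j : {x // x ∈ S}) : V)).biUnion nbB :=
        Finset.mem_biUnion.2 ⟨_, hmemerase, Finset.mem_filter.2 ⟨hbB, hadj⟩⟩
      exact (Finset.mem_sdiff.1 hb).2 this
  · right
    refine ⟨B \ S.biUnion nbB, Finset.sdiff_subset, ?_, key2⟩
    have hcovle : ((S.biUnion nbB).card : ℝ) ≤ (S.card : ℝ) * Δ := by
      have h1 : (S.biUnion nbB).card ≤ ∑ a ∈ S, (nbB a).card := Finset.card_biUnion_le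
      have h2 : ((S.biUnion nbB).card : ℝ) ≤ ∑ a ∈ S, ((nbB a).card : ℝ) := by
        exact_mod_cast h1
      have h3 : ∑ a ∈ S, ((nbB a).card : ℝ) ≤ ∑ _a ∈ S, Δ :=
        Finset.sum_le_sum (fun a ha => hdeg a (hSA ha))
      rw [Finset.sum_const, nsmul_eq_mul] at h3
      linarith
    have hsqrt_nonneg : (0:ℝ) ≤ Real.sqrt (Γ * Δ) := Real.sqrt_nonneg _
    have hcov2 : ((S.biUnion nbB).card : ℝ) ≤ 2 * Real.sqrt (Γ * Δ) := by
      rcases Nat.eq_zero_or_pos S.card with h0 | h1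
      · rw [Finset.card_eq_zero] at h0
        simp only [h0, Finset.biUnion_empty, Finset.card_empty, Nat.cast_zero]
        positivity
      · have hklt : Γ > (S.card : ℝ)^2 * (Δ/4) := by
          by_contra hcon
          exact hk ⟨h1, le_of_not_gt hcon⟩
        have hkpos : (0:ℝ) < (S.card : ℝ) := by exact_mod_cast h1
        have hlt : ((S.card : ℝ) * Δ)^2 < (2 * Real.sqrt (Γ * Δ))^2 := by
          have : (2 * Real.sqrt (Γ * Δ))^2 = 4 * (Γ * Δ) := by
            rw [mul_pow, Real.sq_sqrt (by positivity)]
            ring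
          rw [this]
          have : (S.card : ℝ)^2 * Δ < 4 * Γ := by nlinarith
          calc ((S.card : ℝ) * Δ)^2 = ((S.card : ℝ)^2 * Δ) * Δ := by ring
            _ < (4 * Γ) * Δ := by nlinarith
            _ = 4 * (Γ * Δ) := by ring
        have := lt_of_pow_lt_pow_left₀ 2 (by positivity) hlt
        linarith
    have hcard : ((B \ S.biUnion nbB).card : ℝ) = (B.card : ℝ) - ((S.biUnion nbB).card : ℝ) := by
      rw [Finset.card_sdiff_of_subset hcov_sub]
      have := Finset.card_le_card hcov_sub
      push_cast [Nat.cast_sub this]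
      ring
    rw [hcard]
    linarith

lemma comb_aux : ∀ (N : ℕ) (V : Type) (G : SimpleGraph V) [DecidableEq V] [DecidableRel G.Adj]
    (A B : Finset V), B.Nonempty →
    ∀ (Δ : ℝ), 0 < Δ → Δ ≤ 4 ^ N →
    (∀ a ∈ A, ((B.filter (G.Adj a)).card : ℝ) ≤ Δ) →
    (∀ b ∈ B, ∃ a ∈ A, G.Adj a b) →
    ∀ (Γ : ℝ), 0 < Γ →
    ((B.card : ℝ) < 20 * Real.sqrt (Γ * Δ)) ∨ CombCond G A B Γ := by
  intro N
  induction N with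
  | zero =>
    intro V G _ _ A B hB Δ hΔ hΔle hdeg hnbr Γ hΓ
    by_cases hn : (B.card : ℝ) < 20 * Real.sqrt (Γ * Δ)
    · exact Or.inl hn
    · right
      rcases comb_core G A B Δ Γ hΔ hΓ hdeg (le_of_not_gt hn) with h | ⟨U, hUB, hUcard, hUdeg⟩
      · exact h
      · exfalso
        have hUne : U.Nonempty := by
          rw [← Finset.card_pos]
          have : (0:ℝ) < 18 * Real.sqrt (Γ * Δ) := by positivity
          have : (0:ℝ) < (U.card : ℝ) := lt_of_lt_of_le this hUcard
          exact_mod_cast this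
        obtain ⟨b, hb⟩ := hUne
        obtain ⟨a, haA, hadj⟩ := hnbr b (hUB hb)
        have h1 : (1 : ℝ) ≤ ((U.filter (G.Adj a)).card : ℝ) := by
          have : b ∈ U.filter (G.Adj a) := Finset.mem_filter.2 ⟨hb, hadj⟩
          have := Finset.card_pos.2 ⟨b, this⟩
          exact_mod_cast this
        have h2 := hUdeg a haA
        have : Δ ≤ 1 := by simpa using hΔle
        linarith
  | succ N ih =>
    intro V G _ _ A B hB Δ hΔ hΔle hdeg hnbr Γ hΓ
    by_cases hn : (B.card : ℝ) < 20 * Real.sqrt (Γ * Δ)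
    · exact Or.inl hn
    · right
      rcases comb_core G A B Δ Γ hΔ hΓ hdeg (le_of_not_gt hn) with h | ⟨U, hUB, hUcard, hUdeg⟩
      · exact h
      · have hUne : U.Nonempty := by
          rw [← Finset.card_pos]
          have h0 : (0:ℝ) < 18 * Real.sqrt (Γ * Δ) := by positivity
          have : (0:ℝ) < (U.card : ℝ) := lt_of_lt_of_le h0 hUcard
          exact_mod_cast this
        have hΔ4 : (0:ℝ) < Δ / 4 := by linarith
        have hΔ4le : Δ / 4 ≤ 4 ^ N := by
          rw [pow_succ] at hΔle
          linarith
        have hnbrU : ∀ b ∈ U, ∃ a ∈ A, G.Adj a b := fun b hb => hnbr b (hUB hb)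
        rcases ih V G A U hUne (Δ/4) hΔ4 hΔ4le hUdeg hnbrU Γ hΓ with h | h
        · exfalso
          have hsq : Real.sqrt (Γ * (Δ/4)) = Real.sqrt (Γ * Δ) / 2 := by
            rw [show Γ * (Δ/4) = (Γ * Δ) * (1/2)^2 by ring,
              Real.sqrt_mul (by positivity : (0:ℝ) ≤ Γ * Δ),
              Real.sqrt_sq (by norm_num : (0:ℝ) ≤ 1/2)]
            ring
          rw [hsq] at h
          linarith
        · obtain ⟨k, hk, a, Bs, h1, h2, h3, h4, h5, h6, h7⟩ := h
          exact ⟨k, hk, a, Bs, h1, h2, fun i => (h3 i).trans hUB, h4, h5, h6, h7⟩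

lemma set_ncard_filter {V : Type} [DecidableEq V] (G : SimpleGraph V) [DecidableRel G.Adj]
    (B : Finset V) (a : V) :
    ({b | b ∈ B ∧ G.Adj a b} : Set V).ncard = (B.filter (G.Adj a)).card := by
  rw [show ({b | b ∈ B ∧ G.Adj a b} : Set V) = ↑(B.filter (G.Adj a)) by
    ext x; simp [Finset.mem_filter]]
  exact Set.ncard_coe_finset _

/-- the "comb" lemma: Let `G` be a graph with nonempty disjoint vertex
subsets `A, B` such that each vertex of `A` has at most `Δ > 0` neighbours in `B` and
every vertex of `B` has a neighbour in `A`. Then for every `Γ > 0`, either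
`|B| < 20√(ΓΔ)`, or for some `k ≥ 1` there are `k` vertices `a₁,…,a_k ∈ A` and `k`
pairwise disjoint subsets `B₁,…,B_k ⊆ B` such that for every `i`, `|Bᵢ| ≥ Γ/k²`, and
`aᵢ` is adjacent to every vertex of `Bᵢ` and to no vertex of `Bⱼ` for `j ≠ i`. -/
theorem stmt_17 (V : Type) [Fintype V] (G : SimpleGraph V) (A B : Finset V)
    (hA : A.Nonempty) (hB : B.Nonempty) (hdisj : Disjoint A B)
    (Δ : ℝ) (hΔ : 0 < Δ)
    (hdeg : ∀ a ∈ A, (({b | b ∈ B ∧ G.Adj a b} : Set V).ncard : ℝ) ≤ Δ)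
    (hnbr : ∀ b ∈ B, ∃ a ∈ A, G.Adj a b)
    (Γ : ℝ) (hΓ : 0 < Γ) :
    ((B.card : ℝ) < 20 * Real.sqrt (Γ * Δ)) ∨
    (∃ (k : ℕ), 1 ≤ k ∧ ∃ (a : Fin k → V) (Bs : Fin k → Finset V),
      Function.Injective a ∧ (∀ i, a i ∈ A) ∧ (∀ i, Bs i ⊆ B) ∧
      (∀ i j, i ≠ j → Disjoint (Bs i) (Bs j)) ∧
      (∀ i, Γ / (k : ℝ) ^ 2 ≤ ((Bs i).card : ℝ)) ∧
      (∀ i, ∀ b ∈ Bs i, G.Adj (a i) b) ∧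
      (∀ i j, j ≠ i → ∀ b ∈ Bs j, ¬ G.Adj (a i) b)) := by
  classical
  have hdeg' : ∀ a ∈ A, ((B.filter (G.Adj a)).card : ℝ) ≤ Δ := by
    intro a ha
    rw [← set_ncard_filter]
    exact hdeg a ha
  obtain ⟨n0, hn0⟩ := exists_nat_ge Δ
  have hΔle : Δ ≤ 4 ^ n0 := by
    refine hn0.trans ?_
    exact_mod_cast (Nat.lt_pow_self (n := n0) (by norm_num : 1 < 4)).le
  rcases comb_aux n0 V G A B hB Δ hΔ hΔle hdeg' hnbr Γ hΓ with h | h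
  · exact Or.inl h
  · exact Or.inr h
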